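/- Let N be a positive integer, let (Ω, F, P) be a probability space, and let {Γ_{m,n} : 1 ≤ m ≤ n ≤ N} be a collection of non-negative measurable random variables with the following property: for each subset S of J_N = {(i,j) : 1 ≤ i ≤ j ≤ N} in which any two distinct pairs have no coordinate in common, the family {Γ_{m,n} : (m,n) ∈ S} is mutually independent. Then E(∏_{m ≤ n} Γ_{m,n}) ≤ ∏_{m ≤ n} E(Γ_{m,n}^N)^{1/N}, where expectations are taken in [0, ∞]. -/

import Mathlib

open MeasureTheory ProbabilityTheory
open scoped ENNReal

/-- `J N` is the set of pairs `(i, j)` with `1 ≤ i ≤ j ≤ N`. -/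
def J (N : ℕ) : Finset (ℕ × ℕ) :=
  (Finset.Icc 1 N ×ˢ Finset.Icc 1 N).filter fun p => p.1 ≤ p.2

/-- A set of pairs has no shared coordinates if any two distinct pairs in it
have no coordinate in common. -/
def NoSharedCoord (S : Finset (ℕ × ℕ)) : Prop :=
  ∀ p ∈ S, ∀ q ∈ S, p ≠ q →
    p.1 ≠ q.1 ∧ p.1 ≠ q.2 ∧ p.2 ≠ q.1 ∧ p.2 ≠ q.2

lemma lintegral_prod_of_iIndepFun {ι Ω : Type*} [MeasurableSpace Ω] {μ : Measure Ω}
    [IsProbabilityMeasure μ] {f : ι → Ω → ℝ≥0∞} (hmeas : ∀ i, Measurable (f i))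
    (hindep : iIndepFun f μ)
    (s : Finset ι) :
    ∫⁻ ω, ∏ i ∈ s, f i ω ∂μ = ∏ i ∈ s, ∫⁻ ω, f i ω ∂μ := by
  classical
  induction s using Finset.induction with
  | empty => simp
  | @insert i s hi ih =>
    have hind : IndepFun (∏ j ∈ s, f j) (f i) μ :=
      hindep.indepFun_finset_prod_of_notMem hmeas hi
    have key := lintegral_mul_eq_lintegral_mul_lintegral_of_indepFun
      (μ := μ) (by fun_prop : Measurable (∏ j ∈ s, f j)) (hmeas i) hind
    simp only [Pi.mul_apply, Finset.prod_apply] at key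
    have h1 : ∫⁻ ω, ∏ j ∈ insert i s, f j ω ∂μ
        = ∫⁻ ω, (∏ j ∈ s, f j ω) * f i ω ∂μ :=
      lintegral_congr fun ω => by rw [Finset.prod_insert hi, mul_comm]
    rw [h1, key, ih, Finset.prod_insert hi, mul_comm]

lemma mod_inj_of_mem_Icc {N a b : ℕ} (ha : a ∈ Finset.Icc 1 N) (hb : b ∈ Finset.Icc 1 N)
    (h : a % N = b % N) : a = b := by
  simp only [Finset.mem_Icc] at ha hb
  rcases lt_or_eq_of_le ha.2 with h1 | rfl <;> rcases lt_or_eq_of_le hb.2 with h2 | h2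
  · rwa [Nat.mod_eq_of_lt h1, Nat.mod_eq_of_lt h2] at h
  · subst h2; rw [Nat.mod_eq_of_lt h1, Nat.mod_self] at h; omega
  · rw [Nat.mod_eq_of_lt h2, Nat.mod_self] at h; omega
  · omega


/-- If `{Γ p : p ∈ J N}` are nonnegative random variables such that any subfamily
indexed by pairs sharing no coordinate is mutually independent, then
`E (∏_{m ≤ n} Γ_{m,n}) ≤ ∏_{m ≤ n} E (Γ_{m,n}^N)^{1/N}`. -/
theorem expectation_prod_le_of_partial_independence
    {Ω : Type*} [MeasurableSpace Ω] (μ : Measure Ω) [IsProbabilityMeasure μ]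
    (N : ℕ) (hN : 0 < N) (Γ : ℕ × ℕ → Ω → ℝ≥0∞)
    (hmeas : ∀ p ∈ J N, Measurable (Γ p))
    (hindep : ∀ S : Finset (ℕ × ℕ), S ⊆ J N → NoSharedCoord S →
      iIndepFun
        (fun p : S => Γ p) μ) :
    ∫⁻ ω, ∏ p ∈ J N, Γ p ω ∂μ ≤
      ∏ p ∈ J N, (∫⁻ ω, Γ p ω ^ N ∂μ) ^ (1 / (N : ℝ)) := by
  classical
  set S : ℕ → Finset (ℕ × ℕ) := fun c => (J N).filter (fun p => (p.1 + p.2) % N = c) with hS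
  have hSsub : ∀ c, S c ⊆ J N := fun c => Finset.filter_subset _ _
  have hJmem : ∀ p ∈ J N, p.1 ∈ Finset.Icc 1 N ∧ p.2 ∈ Finset.Icc 1 N ∧ p.1 ≤ p.2 := by
    intro p hp
    simp only [J, Finset.mem_filter, Finset.mem_product] at hp
    exact ⟨hp.1.1, hp.1.2, hp.2⟩
  have cancel : ∀ x a b : ℕ, a ∈ Finset.Icc 1 N → b ∈ Finset.Icc 1 N →
      (x + a) % N = (x + b) % N → a = b := fun x a b ha hb h =>
    mod_inj_of_mem_Icc ha hb (Nat.ModEq.add_left_cancel' x h)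
  have hNS : ∀ c, NoSharedCoord (S c) := by
    intro c p hp q hq hpq
    simp only [hS, Finset.mem_filter] at hp hq
    obtain ⟨hi, hj, hij⟩ := hJmem p hp.1
    obtain ⟨hk, hl, hkl⟩ := hJmem q hq.1
    have hmod : (p.1 + p.2) % N = (q.1 + q.2) % N := hp.2.trans hq.2.symm
    have hIcc : ∀ a ∈ Finset.Icc 1 N, 1 ≤ a ∧ a ≤ N := by
      intro a ha; exact Finset.mem_Icc.mp ha
    refine ⟨?_, ?_, ?_, ?_⟩
    · intro h
      apply hpq
      have : p.2 = q.2 := cancel p.1 p.2 q.2 hj hl (by rw [h] at hmod ⊢; exact hmod)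
      exact Prod.ext h this
    · intro h
      have hjk : p.2 = q.1 := by
        refine cancel p.1 p.2 q.1 hj hk ?_
        rw [hmod, h, Nat.add_comm]
      have h1 := (hIcc _ hi).1
      apply hpq
      have e1 : p.1 = p.2 := le_antisymm hij (by omega)
      exact Prod.ext (by omega) (by omega)
    · intro h
      have hil : p.1 = q.2 := by
        refine cancel p.2 p.1 q.2 hi hl ?_
        rw [Nat.add_comm p.2 p.1, hmod, h]
      apply hpq
      have e1 : p.1 = p.2 := le_antisymm hij (by omega)
      exact Prod.ext (by omega) (by omega)
    · intro h
      apply hpq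
      have : p.1 = q.1 := by
        refine cancel p.2 p.1 q.1 hi hk ?_
        rw [Nat.add_comm p.2 p.1, hmod, h, Nat.add_comm]
      exact Prod.ext this h
  have hfiber : ∀ (g : ℕ × ℕ → ℝ≥0∞),
      ∏ c ∈ Finset.range N, ∏ p ∈ S c, g p = ∏ p ∈ J N, g p := by
    intro g
    exact Finset.prod_fiberwise_of_maps_to
      (fun p _ => Finset.mem_range.mpr (Nat.mod_lt _ hN)) g
  have hint : ∀ c, ∫⁻ ω, ∏ p ∈ S c, Γ p ω ^ N ∂μ = ∏ p ∈ S c, ∫⁻ ω, Γ p ω ^ N ∂μ := by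
    intro c
    have hi := hindep (S c) (hSsub c) (hNS c)
    have hi' : iIndepFun
        (fun p : S c => fun ω => Γ (p : ℕ × ℕ) ω ^ N) μ :=
      hi.comp (fun _ x => x ^ N) (fun _ => measurable_id.pow_const N)
    have hm : ∀ p : S c, Measurable fun ω => Γ (p : ℕ × ℕ) ω ^ N :=
      fun p => (hmeas p (hSsub c p.2)).pow_const N
    have key := lintegral_prod_of_iIndepFun hm hi' Finset.univ
    calc ∫⁻ ω, ∏ p ∈ S c, Γ p ω ^ N ∂μ
        = ∫⁻ ω, ∏ p : S c, Γ (p : ℕ × ℕ) ω ^ N ∂μ :=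
          lintegral_congr fun ω => (Finset.prod_coe_sort _ _).symm
      _ = ∏ p : S c, ∫⁻ ω, Γ (p : ℕ × ℕ) ω ^ N ∂μ := key
      _ = ∏ p ∈ S c, ∫⁻ ω, Γ p ω ^ N ∂μ :=
          Finset.prod_coe_sort (S c) (fun p => ∫⁻ ω, Γ p ω ^ N ∂μ)
  set F : ℕ → Ω → ℝ≥0∞ := fun c ω => ∏ p ∈ S c, Γ p ω ^ N with hF
  have hFmeas : ∀ c ∈ Finset.range N, AEMeasurable (F c) μ := fun c _ =>
    (Finset.measurable_prod _ fun p hp => (hmeas p (hSsub c hp)).pow_const N).aemeasurable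
  have hNne : (N : ℝ) ≠ 0 := Nat.cast_ne_zero.mpr hN.ne'
  have hpsum : ∑ _c ∈ Finset.range N, (1 / (N : ℝ)) = 1 := by
    rw [Finset.sum_const, Finset.card_range, nsmul_eq_mul]
    field_simp
  have holder := ENNReal.lintegral_prod_norm_pow_le (Finset.range N) hFmeas hpsum
    (fun c _ => by positivity)
  have hpow : ∀ x : ℝ≥0∞, (x ^ N) ^ (1 / (N : ℝ)) = x := by
    intro x
    rw [← ENNReal.rpow_natCast x N, ← ENNReal.rpow_mul, mul_one_div,
      div_self hNne, ENNReal.rpow_one]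
  have hLHS : ∀ ω, ∏ c ∈ Finset.range N, F c ω ^ (1 / (N : ℝ)) = ∏ p ∈ J N, Γ p ω := by
    intro ω
    rw [← hfiber (fun p => Γ p ω)]
    refine Finset.prod_congr rfl fun c _ => ?_
    rw [show F c ω = (∏ p ∈ S c, Γ p ω) ^ N from Finset.prod_pow _ _ _, hpow]
  calc ∫⁻ ω, ∏ p ∈ J N, Γ p ω ∂μ
      = ∫⁻ ω, ∏ c ∈ Finset.range N, F c ω ^ (1 / (N : ℝ)) ∂μ :=
        lintegral_congr fun ω => (hLHS ω).symm
    _ ≤ ∏ c ∈ Finset.range N, (∫⁻ ω, F c ω ∂μ) ^ (1 / (N : ℝ)) := holder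
    _ = ∏ c ∈ Finset.range N, ∏ p ∈ S c, (∫⁻ ω, Γ p ω ^ N ∂μ) ^ (1 / (N : ℝ)) := by
        refine Finset.prod_congr rfl fun c _ => ?_
        rw [hF]
        rw [hint c, ENNReal.prod_rpow_of_nonneg (by positivity)]
    _ = ∏ p ∈ J N, (∫⁻ ω, Γ p ω ^ N ∂μ) ^ (1 / (N : ℝ)) := hfiber _
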